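/- Let n, p be positive integers, δ > 0, S̄ ⊆ {1,…,p}, x_1,…,x_n ∈ ℝ^p, and Δ, w̃ ∈ ℝ^p with supp(Δ) ⊆ S̄ and supp(w̃) ⊆ S̄. If the operator norm bound ‖ (1/n) Σ_{j=1}^n (x_jᵀΔ)² x_{j,S̄} x_{j,S̄}ᵀ − (‖Δ‖₂² I_{S̄} + 2ΔΔᵀ) ‖ ≤ δ‖Δ‖₂² holds, then | (1/n) Σ_{j=1}^n (x_jᵀΔ)³ (x_jᵀ w̃) | ≤ (3 + δ) ‖Δ‖₂³ ‖w̃‖₂. -/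
import Mathlib


open MeasureTheory ProbabilityTheory

noncomputable section

/-- Euclidean dot product on `ℝ^p`. -/
def dot {p : ℕ} (u v : Fin p → ℝ) : ℝ := ∑ i, u i * v i

/-- Euclidean norm on `ℝ^p`. -/
def nrm {p : ℕ} (v : Fin p → ℝ) : ℝ := Real.sqrt (∑ i, (v i)^2)

/-- The matrix `‖b‖₂² I + 2 b bᵀ` (population Fisher information / Hessian). -/
def fisherM {p : ℕ} (b : Fin p → ℝ) : Matrix (Fin p) (Fin p) ℝ :=
  (nrm b ^ 2) • (1 : Matrix (Fin p) (Fin p) ℝ) + (2:ℝ) • Matrix.vecMulVec b b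

/-- The correction direction `w_k(b) = -(1/2) (‖b‖₂² I + 2 b bᵀ)⁻¹ e_k`. -/
def wvec {p : ℕ} (b : Fin p → ℝ) (k : Fin p) : Fin p → ℝ :=
  (-(1/2) : ℝ) • (fisherM b)⁻¹.mulVec (Pi.single k 1)

/-- Operator (spectral) norm of a matrix acting on Euclidean space. -/
def opNorm {p : ℕ} (A : Matrix (Fin p) (Fin p) ℝ) : ℝ :=
  ‖LinearMap.toContinuousLinearMap (Matrix.toEuclideanLin A)‖

/-- Restriction of a vector to a coordinate set `S` (zero outside `S`). -/
def restr {p : ℕ} (S : Finset (Fin p)) (v : Fin p → ℝ) : Fin p → ℝ :=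
  fun i => if i ∈ S then v i else 0

/-- Gradient of the phase-retrieval objective
`f(b) = (1/(4n)) ∑ⱼ ((xⱼᵀb)² - yⱼ)²`, namely
`∇f(b) = (1/n) ∑ⱼ ((xⱼᵀb)² - yⱼ)(xⱼᵀb) xⱼ`. -/
def gradf {p n : ℕ} (x : Fin n → Fin p → ℝ) (y : Fin n → ℝ) (b : Fin p → ℝ) : Fin p → ℝ :=
  (1/(n:ℝ)) • ∑ j, (((dot (x j) b)^2 - y j) * dot (x j) b) • x j

/- Auxiliary lemmas -/

lemma nrm_eq_norm {p : ℕ} (v : Fin p → ℝ) :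
    nrm v = ‖(WithLp.equiv 2 (Fin p → ℝ)).symm v‖ := by
  rw [EuclideanSpace.norm_eq, nrm]
  congr 1; apply Finset.sum_congr rfl; intro i _
  rw [Real.norm_eq_abs, sq_abs]; rfl

lemma dot_eq_inner {p : ℕ} (u v : Fin p → ℝ) :
    dot u v = @inner ℝ _ _ ((WithLp.equiv 2 (Fin p → ℝ)).symm u)
      ((WithLp.equiv 2 (Fin p → ℝ)).symm v) := by
  rw [PiLp.inner_apply, dot]
  apply Finset.sum_congr rfl; intro i _
  simp [RCLike.inner_apply, mul_comm]

lemma abs_dot_mulVec_le {p : ℕ} (A : Matrix (Fin p) (Fin p) ℝ) (u v : Fin p → ℝ) :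
    |dot u (A.mulVec v)| ≤ opNorm A * nrm u * nrm v := by
  have h1 : dot u (A.mulVec v) = @inner ℝ _ _ ((WithLp.equiv 2 (Fin p → ℝ)).symm u)
      ((LinearMap.toContinuousLinearMap (Matrix.toEuclideanLin A))
        ((WithLp.equiv 2 (Fin p → ℝ)).symm v)) := by
    rw [dot_eq_inner]
    congr 1
  rw [h1]
  calc _ ≤ ‖(WithLp.equiv 2 (Fin p → ℝ)).symm u‖ *
        ‖(LinearMap.toContinuousLinearMap (Matrix.toEuclideanLin A))
          ((WithLp.equiv 2 (Fin p → ℝ)).symm v)‖ := abs_real_inner_le_norm _ _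
    _ ≤ ‖(WithLp.equiv 2 (Fin p → ℝ)).symm u‖ *
        (opNorm A * ‖(WithLp.equiv 2 (Fin p → ℝ)).symm v‖) := by
        apply mul_le_mul_of_nonneg_left (ContinuousLinearMap.le_opNorm _ _) (norm_nonneg _)
    _ = opNorm A * nrm u * nrm v := by rw [nrm_eq_norm, nrm_eq_norm]; ring

lemma abs_dot_le {p : ℕ} (u v : Fin p → ℝ) : |dot u v| ≤ nrm u * nrm v := by
  rw [dot_eq_inner, nrm_eq_norm, nrm_eq_norm]
  exact abs_real_inner_le_norm _ _

lemma dot_comm' {p : ℕ} (u v : Fin p → ℝ) : dot u v = dot v u := by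
  simp [dot, mul_comm]

lemma dot_smul_right {p : ℕ} (c : ℝ) (u v : Fin p → ℝ) : dot u (c • v) = c * dot u v := by
  simp [dot, Finset.mul_sum]; apply Finset.sum_congr rfl; intros; ring

lemma dot_add_right {p : ℕ} (u v w : Fin p → ℝ) : dot u (v + w) = dot u v + dot u w := by
  simp [dot, mul_add, Finset.sum_add_distrib]

lemma dot_sub_right {p : ℕ} (u v w : Fin p → ℝ) : dot u (v - w) = dot u v - dot u w := by
  simp [dot, mul_sub, Finset.sum_sub_distrib]

lemma dot_sum_right {p : ℕ} {ι : Type*} (s : Finset ι) (u : Fin p → ℝ) (f : ι → Fin p → ℝ) :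
    dot u (∑ j ∈ s, f j) = ∑ j ∈ s, dot u (f j) := by
  simp only [dot, Finset.sum_apply, Finset.mul_sum]
  exact Finset.sum_comm

lemma vecMulVec_mulVec' {p : ℕ} (a b v : Fin p → ℝ) :
    (Matrix.vecMulVec a b).mulVec v = (dot b v) • a := by
  ext i
  simp only [Matrix.mulVec, Matrix.vecMulVec_apply, dotProduct, dot, Pi.smul_apply,
    smul_eq_mul, Finset.mul_sum, Finset.sum_mul]
  apply Finset.sum_congr rfl; intros; ring

lemma sum_mulVec' {p : ℕ} {ι : Type*} (s : Finset ι) (M : ι → Matrix (Fin p) (Fin p) ℝ)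
    (v : Fin p → ℝ) : (∑ j ∈ s, M j).mulVec v = ∑ j ∈ s, (M j).mulVec v := by
  ext i
  simp only [Matrix.mulVec, dotProduct, Matrix.sum_apply, Finset.sum_apply,
    Finset.sum_mul]
  exact Finset.sum_comm

lemma dot_restr_right {p : ℕ} (S : Finset (Fin p)) (u v : Fin p → ℝ)
    (h : Function.support u ⊆ (S : Set (Fin p))) : dot u (restr S v) = dot u v := by
  apply Finset.sum_congr rfl; intro i _
  by_cases hi : i ∈ S
  · simp [restr, hi]
  · have : u i = 0 := by
      by_contra hc
      exact hi (h hc)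
    simp [this]

lemma nrm_sq {p : ℕ} (v : Fin p → ℝ) : nrm v ^ 2 = dot v v := by
  rw [nrm, Real.sq_sqrt (Finset.sum_nonneg fun i _ => sq_nonneg _)]
  simp [dot, sq]

lemma nrm_nonneg' {p : ℕ} (v : Fin p → ℝ) : 0 ≤ nrm v := Real.sqrt_nonneg _

/-- Deterministic bound on the cubic error term, conditional on the
empirical-Hessian concentration event for `Δ`:
`|(1/n) ∑ⱼ (xⱼᵀΔ)³(xⱼᵀw̃)| ≤ (3 + δ)‖Δ‖₂³‖w̃‖₂`. -/
theorem stmt_13 {n p : ℕ} (hn : 0 < n) (δ : ℝ) (hδ : 0 < δ) (Sb : Finset (Fin p))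
    (x : Fin n → Fin p → ℝ) (Δ wt : Fin p → ℝ)
    (hΔS : Function.support Δ ⊆ (Sb : Set (Fin p)))
    (hwS : Function.support wt ⊆ (Sb : Set (Fin p)))
    (hop : opNorm ((1/(n:ℝ)) • ∑ j, (dot (x j) Δ ^ 2) •
          Matrix.vecMulVec (restr Sb (x j)) (restr Sb (x j))
        - ((nrm Δ ^ 2) • Matrix.diagonal (fun i => if i ∈ Sb then (1:ℝ) else 0)
            + (2:ℝ) • Matrix.vecMulVec Δ Δ))
      ≤ δ * nrm Δ ^ 2) :
    |(1/(n:ℝ)) * ∑ j, dot (x j) Δ ^ 3 * dot (x j) wt|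
      ≤ (3 + δ) * nrm Δ ^ 3 * nrm wt := by
  set A : Matrix (Fin p) (Fin p) ℝ := (1/(n:ℝ)) • ∑ j, (dot (x j) Δ ^ 2) •
      Matrix.vecMulVec (restr Sb (x j)) (restr Sb (x j)) with hA
  set M : Matrix (Fin p) (Fin p) ℝ :=
      (nrm Δ ^ 2) • Matrix.diagonal (fun i => if i ∈ Sb then (1:ℝ) else 0)
        + (2:ℝ) • Matrix.vecMulVec Δ Δ with hM
  have h1 : dot Δ (A.mulVec wt) = (1/(n:ℝ)) * ∑ j, dot (x j) Δ ^ 3 * dot (x j) wt := by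
    rw [hA, Matrix.smul_mulVec, dot_smul_right, sum_mulVec', dot_sum_right]
    congr 1
    apply Finset.sum_congr rfl; intro j _
    rw [Matrix.smul_mulVec, dot_smul_right, vecMulVec_mulVec', dot_smul_right]
    rw [dot_comm' (restr Sb (x j)) wt, dot_restr_right Sb wt (x j) hwS,
      dot_restr_right Sb Δ (x j) hΔS]
    rw [dot_comm' wt (x j), dot_comm' Δ (x j)]
    ring
  have hwt : restr Sb wt = wt := by
    funext i
    by_cases hi : i ∈ Sb
    · simp [restr, hi]
    · have : wt i = 0 := by
        by_contra hc
        exact hi (hwS hc)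
      simp [restr, hi, this]
  have hdiag : (Matrix.diagonal (fun i => if i ∈ Sb then (1:ℝ) else 0)).mulVec wt
      = restr Sb wt := by
    ext i
    rw [Matrix.mulVec_diagonal]
    by_cases hi : i ∈ Sb <;> simp [restr, hi]
  have h2 : dot Δ (M.mulVec wt) = 3 * nrm Δ ^ 2 * dot Δ wt := by
    rw [hM, Matrix.add_mulVec, dot_add_right, Matrix.smul_mulVec,
      Matrix.smul_mulVec, dot_smul_right, dot_smul_right, vecMulVec_mulVec',
      dot_smul_right, hdiag, hwt, ← nrm_sq]
    ring
  have hmain : (1/(n:ℝ)) * ∑ j, dot (x j) Δ ^ 3 * dot (x j) wt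
      = dot Δ ((A - M).mulVec wt) + 3 * nrm Δ ^ 2 * dot Δ wt := by
    rw [Matrix.sub_mulVec, dot_sub_right, h1, h2]; ring
  rw [hmain]
  have hb1 : |dot Δ ((A - M).mulVec wt)| ≤ δ * nrm Δ ^ 2 * nrm Δ * nrm wt := by
    calc |dot Δ ((A - M).mulVec wt)| ≤ opNorm (A - M) * nrm Δ * nrm wt :=
          abs_dot_mulVec_le _ _ _
      _ ≤ δ * nrm Δ ^ 2 * nrm Δ * nrm wt := by
          have := mul_le_mul_of_nonneg_right (mul_le_mul_of_nonneg_right hop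
            (nrm_nonneg' Δ)) (nrm_nonneg' wt)
          linarith
  have hb2 : |3 * nrm Δ ^ 2 * dot Δ wt| ≤ 3 * nrm Δ ^ 2 * (nrm Δ * nrm wt) := by
    rw [abs_mul]
    have h3 : |3 * nrm Δ ^ 2| = 3 * nrm Δ ^ 2 := abs_of_nonneg (by positivity)
    rw [h3]
    exact mul_le_mul_of_nonneg_left (abs_dot_le Δ wt) (by positivity)
  calc |dot Δ ((A - M).mulVec wt) + 3 * nrm Δ ^ 2 * dot Δ wt|
      ≤ |dot Δ ((A - M).mulVec wt)| + |3 * nrm Δ ^ 2 * dot Δ wt| := abs_add_le _ _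
    _ ≤ δ * nrm Δ ^ 2 * nrm Δ * nrm wt + 3 * nrm Δ ^ 2 * (nrm Δ * nrm wt) := by
        exact add_le_add hb1 hb2
    _ = (3 + δ) * nrm Δ ^ 3 * nrm wt := by ring
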